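/- Characterization of the bubble space B^x_K: In ℝ[x,y,z], let Q^x := span{x^i y^j z^k : 0 ≤ i ≤ 2, 0 ≤ j ≤ 1, 0 ≤ k ≤ 1}, B^x := span{(x²−1)(y²−1), x(x²−1)(y²−1), (x²−1)(z²−1), y(x²−1)(z²−1)}, and A^x := Q^x + B^x. A polynomial v ∈ A^x satisfies v(ε₁,ε₂,ε₃) = 0 for all ε₁,ε₂,ε₃ ∈ {−1,1} and ∫_{−1}^{1} v(t,ε,δ) dt = 0 for all ε,δ ∈ {−1,1} if and only if v ∈ B^x. -/

import Mathlib

open MvPolynomial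

noncomputable section

/-- Polynomials in three variables `x, y, z` over `ℝ`. -/
abbrev M3 : Type := MvPolynomial (Fin 3) ℝ

def x : M3 := X 0
def y : M3 := X 1
def z : M3 := X 2

/-- `Q^x := span{x^i y^j z^k : i ≤ 2, j ≤ 1, k ≤ 1}`. -/
def Qx : Submodule ℝ M3 :=
  Submodule.span ℝ
    {p : M3 | ∃ i j k : ℕ, i ≤ 2 ∧ j ≤ 1 ∧ k ≤ 1 ∧ p = x ^ i * y ^ j * z ^ k}

/-- `B^x := span{(x²−1)(y²−1), x(x²−1)(y²−1), (x²−1)(z²−1), y(x²−1)(z²−1)}`. -/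
def Bx : Submodule ℝ M3 :=
  Submodule.span ℝ
    {(x ^ 2 - 1) * (y ^ 2 - 1), x * (x ^ 2 - 1) * (y ^ 2 - 1),
      (x ^ 2 - 1) * (z ^ 2 - 1), y * (x ^ 2 - 1) * (z ^ 2 - 1)}

/-- `A^x := Q^x + B^x`. -/
def Ax : Submodule ℝ M3 := Qx ⊔ Bx

/-! ### Auxiliary lemmas -/

def evalLM (p : Fin 3 → ℝ) : M3 →ₗ[ℝ] ℝ where
  toFun := eval p
  map_add' := by simp
  map_smul' := by simp [smul_eval]

lemma Bx_edge (t ε δ : ℝ) (hε : ε = -1 ∨ ε = 1) (hδ : δ = -1 ∨ δ = 1)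
    {b : M3} (hb : b ∈ Bx) : eval ![t, ε, δ] b = 0 := by
  have hle : Bx ≤ LinearMap.ker (evalLM ![t, ε, δ]) := by
    rw [Bx, Submodule.span_le]
    intro p hp
    simp only [Set.mem_insert_iff, Set.mem_singleton_iff] at hp
    rcases hp with rfl | rfl | rfl | rfl <;>
      · simp only [SetLike.mem_coe, LinearMap.mem_ker, evalLM, LinearMap.coe_mk,
          AddHom.coe_mk, map_mul, map_sub, map_pow, map_one, x, y, z, eval_X]
        rcases hε with rfl | rfl <;> rcases hδ with rfl | rfl <;> norm_num [Matrix.cons_val_two]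
  exact hle hb

lemma Bx_vertex (e1 e2 e3 : ℝ) (h1 : e1 = -1 ∨ e1 = 1)
    {b : M3} (hb : b ∈ Bx) : eval ![e1, e2, e3] b = 0 := by
  have hle : Bx ≤ LinearMap.ker (evalLM ![e1, e2, e3]) := by
    rw [Bx, Submodule.span_le]
    intro p hp
    simp only [Set.mem_insert_iff, Set.mem_singleton_iff] at hp
    rcases hp with rfl | rfl | rfl | rfl <;>
      · simp only [SetLike.mem_coe, LinearMap.mem_ker, evalLM, LinearMap.coe_mk,
          AddHom.coe_mk, map_mul, map_sub, map_pow, map_one, x, y, z, eval_X]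
        rcases h1 with rfl | rfl <;> norm_num
  exact hle hb

lemma integ (A B C : ℝ) : (∫ t in (-1:ℝ)..1, (A + B*t + C*t^2)) = 2*A + 2/3*C := by
  have h : ∀ t ∈ Set.uIcc (-1:ℝ) 1,
      HasDerivAt (fun s => A*s + B*(s^2/2) + C*(s^3/3)) (A + B*t + C*t^2) t := by
    intro t _
    have := (((hasDerivAt_id t).const_mul A).add
      (((hasDerivAt_pow 2 t).div_const 2).const_mul B)).add
      (((hasDerivAt_pow 3 t).div_const 3).const_mul C)
    exact this.congr_deriv (by norm_num)
  rw [intervalIntegral.integral_eq_sub_of_hasDerivAt h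
    ((by fun_prop : Continuous fun t:ℝ => A + B*t + C*t^2).intervalIntegrable _ _)]
  ring

lemma Qx_le : Qx ≤ Submodule.span ℝ
    ({1, x, x^2, y, x*y, x^2*y, z, x*z, x^2*z, y*z, x*y*z, x^2*y*z} : Set M3) := by
  rw [Qx, Submodule.span_le]
  rintro p ⟨i, j, k, hi, hj, hk, rfl⟩
  apply Submodule.subset_span
  interval_cases i <;> interval_cases j <;> interval_cases k <;>
    · simp only [pow_zero, pow_one, one_mul, mul_one, Set.mem_insert_iff,
        Set.mem_singleton_iff]
      tauto

def bigq (c0 c1 c2 c3 c4 c5 c6 c7 c8 c9 c10 c11 : ℝ) : M3 :=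
  c0 • 1 + c1 • x + c2 • x^2 + c3 • y + c4 • (x*y) + c5 • (x^2*y) + c6 • z +
  c7 • (x*z) + c8 • (x^2*z) + c9 • (y*z) + c10 • (x*y*z) + c11 • (x^2*y*z)

lemma ev_bigq (c0 c1 c2 c3 c4 c5 c6 c7 c8 c9 c10 c11 a b c : ℝ) :
    eval ![a,b,c] (bigq c0 c1 c2 c3 c4 c5 c6 c7 c8 c9 c10 c11) =
      c0 + c1*a + c2*a^2 + c3*b + c4*(a*b) + c5*(a^2*b) + c6*c +
      c7*(a*c) + c8*(a^2*c) + c9*(b*c) + c10*(a*b*c) + c11*(a^2*b*c) := by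
  simp [bigq, x, y, z, smul_eval]

lemma bigq_zero (c0 c1 c2 c3 c4 c5 c6 c7 c8 c9 c10 c11 : ℝ)
    (hV : ∀ e1 e2 e3 : ℝ, (e1 = -1 ∨ e1 = 1) → (e2 = -1 ∨ e2 = 1) → (e3 = -1 ∨ e3 = 1) →
      eval ![e1, e2, e3] (bigq c0 c1 c2 c3 c4 c5 c6 c7 c8 c9 c10 c11) = 0)
    (hI : ∀ ε δ : ℝ, (ε = -1 ∨ ε = 1) → (δ = -1 ∨ δ = 1) →
      (∫ t in (-1:ℝ)..1, eval ![t, ε, δ] (bigq c0 c1 c2 c3 c4 c5 c6 c7 c8 c9 c10 c11)) = 0) :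
    bigq c0 c1 c2 c3 c4 c5 c6 c7 c8 c9 c10 c11 = 0 := by
  have V1 := hV 1 1 1 (Or.inr rfl) (Or.inr rfl) (Or.inr rfl)
  have V2 := hV 1 1 (-1) (Or.inr rfl) (Or.inr rfl) (Or.inl rfl)
  have V3 := hV 1 (-1) 1 (Or.inr rfl) (Or.inl rfl) (Or.inr rfl)
  have V4 := hV 1 (-1) (-1) (Or.inr rfl) (Or.inl rfl) (Or.inl rfl)
  have V5 := hV (-1) 1 1 (Or.inl rfl) (Or.inr rfl) (Or.inr rfl)
  have V6 := hV (-1) 1 (-1) (Or.inl rfl) (Or.inr rfl) (Or.inl rfl)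
  have V7 := hV (-1) (-1) 1 (Or.inl rfl) (Or.inl rfl) (Or.inr rfl)
  have V8 := hV (-1) (-1) (-1) (Or.inl rfl) (Or.inl rfl) (Or.inl rfl)
  rw [ev_bigq] at V1 V2 V3 V4 V5 V6 V7 V8
  norm_num at V1 V2 V3 V4 V5 V6 V7 V8
  have I1 := hI 1 1 (Or.inr rfl) (Or.inr rfl)
  have I2 := hI 1 (-1) (Or.inr rfl) (Or.inl rfl)
  have I3 := hI (-1) 1 (Or.inl rfl) (Or.inr rfl)
  have I4 := hI (-1) (-1) (Or.inl rfl) (Or.inl rfl)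
  rw [intervalIntegral.integral_congr
      (g := fun t => (c0+c3+c6+c9) + (c1+c4+c7+c10)*t + (c2+c5+c8+c11)*t^2)
      (fun t _ => by rw [ev_bigq]; ring), integ] at I1
  rw [intervalIntegral.integral_congr
      (g := fun t => (c0+c3-c6-c9) + (c1+c4-c7-c10)*t + (c2+c5-c8-c11)*t^2)
      (fun t _ => by rw [ev_bigq]; ring), integ] at I2
  rw [intervalIntegral.integral_congr
      (g := fun t => (c0-c3+c6-c9) + (c1-c4+c7-c10)*t + (c2-c5+c8-c11)*t^2)
      (fun t _ => by rw [ev_bigq]; ring), integ] at I3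
  rw [intervalIntegral.integral_congr
      (g := fun t => (c0-c3-c6+c9) + (c1-c4-c7+c10)*t + (c2-c5-c8+c11)*t^2)
      (fun t _ => by rw [ev_bigq]; ring), integ] at I4
  have h0 : c0 = 0 := by linarith
  have h1 : c1 = 0 := by linarith
  have h2 : c2 = 0 := by linarith
  have h3 : c3 = 0 := by linarith
  have h4 : c4 = 0 := by linarith
  have h5 : c5 = 0 := by linarith
  have h6 : c6 = 0 := by linarith
  have h7 : c7 = 0 := by linarith
  have h8 : c8 = 0 := by linarith
  have h9 : c9 = 0 := by linarith
  have h10 : c10 = 0 := by linarith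
  have h11 : c11 = 0 := by linarith
  simp [bigq, h0, h1, h2, h3, h4, h5, h6, h7, h8, h9, h10, h11]

/-- Characterization of the bubble space `B^x`: a polynomial `v ∈ A^x`
vanishes at the eight vertices of `[−1,1]³` and has vanishing integrals over
the four edges parallel to the `x`-axis if and only if `v ∈ B^x`. -/
theorem bubble_space_characterization (v : M3) (hv : v ∈ Ax) :
    ((∀ ε₁ ∈ ({-1, 1} : Set ℝ), ∀ ε₂ ∈ ({-1, 1} : Set ℝ), ∀ ε₃ ∈ ({-1, 1} : Set ℝ),
        eval ![ε₁, ε₂, ε₃] v = 0) ∧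
      (∀ ε ∈ ({-1, 1} : Set ℝ), ∀ δ ∈ ({-1, 1} : Set ℝ),
        (∫ t in (-1 : ℝ)..1, eval ![t, ε, δ] v) = 0)) ↔ v ∈ Bx := by
  constructor
  · rintro ⟨hV, hI⟩
    obtain ⟨q, hq, b, hb, rfl⟩ := Submodule.mem_sup.mp hv
    have hVq : ∀ e1 e2 e3 : ℝ, (e1 = -1 ∨ e1 = 1) → (e2 = -1 ∨ e2 = 1) →
        (e3 = -1 ∨ e3 = 1) → eval ![e1, e2, e3] q = 0 := by
      intro e1 e2 e3 h1 h2 h3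
      have h := hV e1 (by simpa using h1) e2 (by simpa using h2) e3 (by simpa using h3)
      rw [map_add, Bx_vertex e1 e2 e3 h1 hb, add_zero] at h
      exact h
    have hIq : ∀ ε δ : ℝ, (ε = -1 ∨ ε = 1) → (δ = -1 ∨ δ = 1) →
        (∫ t in (-1:ℝ)..1, eval ![t, ε, δ] q) = 0 := by
      intro ε δ h1 h2
      have h := hI ε (by simpa using h1) δ (by simpa using h2)
      rw [intervalIntegral.integral_congr (g := fun t => eval ![t, ε, δ] q)
        (fun t _ => by rw [map_add, Bx_edge t ε δ h1 h2 hb, add_zero])] at h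
      exact h
    have hq' := Qx_le hq
    simp only [Submodule.mem_span_insert, Submodule.mem_span_singleton] at hq'
    obtain ⟨c0, q1, ⟨c1, q2, ⟨c2, q3, ⟨c3, q4, ⟨c4, q5, ⟨c5, q6, ⟨c6, q7, ⟨c7, q8,
      ⟨c8, q9, ⟨c9, q10, ⟨c10, q11, ⟨c11, e11⟩, e10⟩, e9⟩, e8⟩, e7⟩, e6⟩, e5⟩,
      e4⟩, e3⟩, e2⟩, e1⟩, e0⟩ := hq'
    have hQ : q = bigq c0 c1 c2 c3 c4 c5 c6 c7 c8 c9 c10 c11 := by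
      rw [e0, e1, e2, e3, e4, e5, e6, e7, e8, e9, e10, ← e11]
      simp only [bigq]
      ring
    rw [hQ] at hVq hIq
    rw [hQ, bigq_zero c0 c1 c2 c3 c4 c5 c6 c7 c8 c9 c10 c11 hVq hIq, zero_add]
    exact hb
  · intro hbx
    constructor
    · intro e1 h1 e2 h2 e3 h3
      simp only [Set.mem_insert_iff, Set.mem_singleton_iff] at h1
      exact Bx_vertex e1 e2 e3 h1 hbx
    · intro ε hε δ hδ
      simp only [Set.mem_insert_iff, Set.mem_singleton_iff] at hε hδ
      have h : ∀ t : ℝ, eval ![t, ε, δ] v = 0 := fun t => Bx_edge t ε δ hε hδ hbx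
      simp only [h, intervalIntegral.integral_zero]

end
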